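/- Let N ≥ 2 and let M = (m_{i,j}) ∈ M(N,r) with λ = ro(M) and μ = co(M). Fix h with 1 ≤ h < N and λ_h ≥ 1, and set λ⁻ = λ − e_h + e_{h+1} ∈ Λ(N,r), where e_i ∈ ℕ^N is the i-th standard basis vector. Then the set product (W_{λ⁻}·W_λ)·(W_λ d_M W_μ) = {x·y : x ∈ W_{λ⁻}W_λ, y ∈ W_λ d_M W_μ} is equal to the union, over those k ∈ {1,…,N} with m_{h,k} ≥ 1, of the double cosets W_{λ⁻} d_{M⁻_{h,k}} W_μ, and these double cosets are pairwise disjoint. -/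

import Mathlib

open Equiv Finset

/-- The simple transposition `s i = (i, i+1)` (1-based) in the symmetric group `W` on
`{1, …, r}`, realised as `Equiv.Perm (Fin r)`, where the point `x : Fin r` carries the
label `x.val + 1`.  For `i` outside the range `1 ≤ i < r` we set `s i = 1`. -/
def sT (r : ℕ) (i : ℕ) : Equiv.Perm (Fin r) :=
  if h : 1 ≤ i ∧ i < r then Equiv.swap ⟨i - 1, by omega⟩ ⟨i, h.2⟩ else 1

/-- The ascending product `s_a · s_{a+1} ⋯ s_{a+n-1}` (equal to `1` when `n = 0`);
the rightmost factor acts first. -/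
def ascProd (r a n : ℕ) : Equiv.Perm (Fin r) :=
  ((List.range n).map (fun t => sT r (a + t))).prod

/-- The descending product `s_b · s_{b-1} ⋯ s_{b-n+1}` (equal to `1` when `n = 0`);
the rightmost factor acts first. -/
def descProd (r b n : ℕ) : Equiv.Perm (Fin r) :=
  ((List.range n).map (fun t => sT r (b - t))).prod

/-- The Coxeter length `ℓ(w)`, i.e. the number of inversions of `w`. -/
def clen {r : ℕ} (w : Equiv.Perm (Fin r)) : ℕ :=
  (Finset.univ.filter (fun p : Fin r × Fin r => p.1 < p.2 ∧ w p.2 < w p.1)).card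

/-- `ptil lam i` is the partial sum `λ̃_i = λ_1 + ⋯ + λ_i` (1-based `i`). -/
def ptil {N : ℕ} (lam : Fin N → ℕ) (i : ℕ) : ℕ :=
  ∑ l : Fin N, if l.val + 1 ≤ i then lam l else 0

/-- The block `N_i^λ = {λ̃_{i-1}+1, …, λ̃_i}` (1-based `i`), as a set of points of `Fin r`
(the point `x` has label `x.val + 1`). -/
def blockSet (r : ℕ) {N : ℕ} (lam : Fin N → ℕ) (i : ℕ) : Finset (Fin r) :=
  Finset.univ.filter (fun x => ptil lam (i - 1) ≤ x.val ∧ x.val < ptil lam i)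

/-- The index of the block of `λ` containing the point `x`. -/
def blockOf {r N : ℕ} (lam : Fin N → ℕ) (x : Fin r) : ℕ :=
  ((Finset.range N).filter (fun i => ptil lam (i + 1) ≤ x.val)).card

/-- The Young subgroup `W_λ`: all permutations stabilizing each block `N_i^λ`. -/
def young (r : ℕ) {N : ℕ} (lam : Fin N → ℕ) : Subgroup (Equiv.Perm (Fin r)) where
  carrier := {w | ∀ x : Fin r, blockOf lam (w x) = blockOf lam x}
  one_mem' := by intro x; rfl
  mul_mem' := by
    intro a b ha hb x
    have h := (ha (b x)).trans (hb x)
    simpa [Equiv.Perm.mul_apply] using h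
  inv_mem' := by
    intro a ha x
    have h := ha (a⁻¹ x)
    simpa using h.symm

/-- The double coset `W_λ d W_μ`, as a set of permutations. -/
def dcoset (r : ℕ) {N : ℕ} (lam mu : Fin N → ℕ) (d : Equiv.Perm (Fin r)) :
    Set (Equiv.Perm (Fin r)) :=
  {w | ∃ x ∈ young r lam, ∃ y ∈ young r mu, w = x * d * y}

/-- `d ∈ 𝒟_{λμ}`: `d` has minimal length in its double coset `W_λ d W_μ`. -/
def isMinRep (r : ℕ) {N : ℕ} (lam mu : Fin N → ℕ) (d : Equiv.Perm (Fin r)) : Prop :=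
  ∀ w ∈ dcoset r lam mu d, clen d ≤ clen w

/-- The composition `ro M` of row sums of a matrix. -/
def rowSums {N : ℕ} (M : Fin N → Fin N → ℕ) : Fin N → ℕ := fun i => ∑ j, M i j

/-- The composition `co M` of column sums of a matrix. -/
def colSums {N : ℕ} (M : Fin N → Fin N → ℕ) : Fin N → ℕ := fun j => ∑ i, M i j

/-- `d` is the distinguished double coset representative `d_M` attached to the matrix `M`:
`d` is the minimal length element in its `(W_{ro M}, W_{co M})` double coset, and
`|N_i^{ro M} ∩ d(N_j^{co M})| = m_{i,j}` for all `i, j`. -/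
def isDM (r : ℕ) {N : ℕ} (M : Fin N → Fin N → ℕ) (d : Equiv.Perm (Fin r)) : Prop :=
  isMinRep r (rowSums M) (colSums M) d ∧
    ∀ i j : Fin N,
      ((blockSet r (rowSums M) (i.val + 1)) ∩
        (blockSet r (colSums M) (j.val + 1)).image d).card = M i j

/-- The `(i,j)` entry of `M` with 1-based indices (`0` outside the range). -/
def ent {N : ℕ} (M : Fin N → Fin N → ℕ) (i j : ℕ) : ℕ :=
  if h : 1 ≤ i ∧ i ≤ N ∧ 1 ≤ j ∧ j ≤ N then M ⟨i - 1, by omega⟩ ⟨j - 1, by omega⟩ else 0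

/-- `μ̃_{j-1}` for `μ = co M`: the sum of the first `j - 1` column sums of `M`. -/
def colPS {N : ℕ} (M : Fin N → Fin N → ℕ) (j : ℕ) : ℕ :=
  ∑ p : Fin N × Fin N, if p.2.val + 1 < j then M p.1 p.2 else 0

/-- `σ_{i,j} = μ̃_{j-1} + Σ_{k ≤ i, l ≥ j} m_{k,l}` (1-based `i, j`). -/
def sigmaS {N : ℕ} (M : Fin N → Fin N → ℕ) (i j : ℕ) : ℕ :=
  colPS M j + ∑ p : Fin N × Fin N, if p.1.val + 1 ≤ i ∧ j ≤ p.2.val + 1 then M p.1 p.2 else 0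

/-- `m̃_{i,j} = μ̃_{j-1} + Σ_{h ≤ i} m_{h,j}` (1-based `i, j`): the partial sum of the
column-reading sequence of `M` up to the entry `(i, j)`. -/
def mtil {N : ℕ} (M : Fin N → Fin N → ℕ) (i j : ℕ) : ℕ :=
  colPS M j + ∑ p : Fin N × Fin N, if p.1.val + 1 ≤ i ∧ p.2.val + 1 = j then M p.1 p.2 else 0

/-- The element `w_{i,j}` (1-based `i, j`):
`w_{i,j} = (s_{σ_{i-1,j}} ⋯ s_{m̃_{i-1,j}+1})(s_{σ_{i-1,j}+1} ⋯ s_{m̃_{i-1,j}+2}) ⋯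
(s_{σ_{i-1,j}+m_{i,j}-1} ⋯ s_{m̃_{i,j}})`, with `w_{i,j} = 1` when `m_{i,j} = 0` or
`σ_{i-1,j} = m̃_{i-1,j}`. -/
def wE (r : ℕ) {N : ℕ} (M : Fin N → Fin N → ℕ) (i j : ℕ) : Equiv.Perm (Fin r) :=
  ((List.range (ent M i j)).map
    (fun x => descProd r (sigmaS M (i - 1) j + x) (sigmaS M (i - 1) j - mtil M (i - 1) j))).prod

/-- The column product `w_{2,j} w_{3,j} ⋯ w_{N,j}`. -/
def colProd (r : ℕ) {N : ℕ} (M : Fin N → Fin N → ℕ) (j : ℕ) : Equiv.Perm (Fin r) :=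
  ((List.range (N - 1)).map (fun t => wE r M (t + 2) j)).prod

/-- `Π_t`: the product of the first `t` column products
`(w_{2,1} ⋯ w_{N,1})(w_{2,2} ⋯ w_{N,2}) ⋯ (w_{2,t} ⋯ w_{N,t})`. -/
def piProd (r : ℕ) {N : ℕ} (M : Fin N → Fin N → ℕ) (t : ℕ) : Equiv.Perm (Fin r) :=
  ((List.range t).map (fun c => colProd r M (c + 1))).prod

section Helpers

variable {r N : ℕ}

lemma mem_young_iff {lam : Fin N → ℕ} {w : Equiv.Perm (Fin r)} :
    w ∈ young r lam ↔ ∀ x : Fin r, blockOf lam (w x) = blockOf lam x := Iff.rfl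

lemma downset_mem (S : Finset ℕ) (hS : ∀ a b : ℕ, a ≤ b → b ∈ S → a ∈ S) (a : ℕ) :
    a ∈ S ↔ a < S.card := by
  constructor
  · intro ha
    have hsub : Finset.range (a + 1) ⊆ S := by
      intro b hb
      exact hS b a (Nat.lt_succ_iff.mp (Finset.mem_range.mp hb)) ha
    have := Finset.card_le_card hsub
    simpa using this
  · intro ha
    by_contra hna
    have hsub : S ⊆ Finset.range a := by
      intro b hb
      rw [Finset.mem_range]
      by_contra hba
      exact hna (hS a b (le_of_not_gt hba) hb)
    have := Finset.card_le_card hsub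
    simp at this
    omega

lemma ptil_mono (lam : Fin N → ℕ) {i i' : ℕ} (hii : i ≤ i') : ptil lam i ≤ ptil lam i' := by
  apply Finset.sum_le_sum
  intro l _
  split_ifs <;> omega

lemma ptil_zero (lam : Fin N → ℕ) : ptil lam 0 = 0 := by simp [ptil]

lemma ptil_ge (lam : Fin N → ℕ) {i : ℕ} (hi : N ≤ i) : ptil lam i = ∑ l, lam l := by
  unfold ptil
  apply Finset.sum_congr rfl
  intro l _
  have := l.isLt
  rw [if_pos (by omega)]

lemma ptil_succ (lam : Fin N → ℕ) {i : ℕ} (hi : i < N) :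
    ptil lam (i + 1) = ptil lam i + lam ⟨i, hi⟩ := by
  unfold ptil
  have : ∀ l : Fin N, (if l.val + 1 ≤ i + 1 then lam l else 0)
      = (if l.val + 1 ≤ i then lam l else 0) + (if l = ⟨i, hi⟩ then lam l else 0) := by
    intro l
    by_cases he : l = ⟨i, hi⟩
    · subst he; rw [if_pos (by simp), if_neg (by simp), if_pos rfl, zero_add]
    · have hne : l.val ≠ i := fun hv => he (Fin.ext hv)
      rw [if_neg he, add_zero]
      by_cases hc : l.val + 1 ≤ i
      · rw [if_pos (by omega), if_pos hc]
      · rw [if_neg (by omega), if_neg hc]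
  rw [Finset.sum_congr rfl (fun l _ => this l), Finset.sum_add_distrib]
  congr 1
  simp

lemma blockOf_spec (lam : Fin N → ℕ) (hsum : ∑ l, lam l = r) (x : Fin r) :
    blockOf lam x < N ∧ ptil lam (blockOf lam x) ≤ x.val ∧ x.val < ptil lam (blockOf lam x + 1) := by
  have hr : 0 < r := x.pos
  have hdown : ∀ a b : ℕ, a ≤ b →
      b ∈ (Finset.range N).filter (fun i => ptil lam (i + 1) ≤ x.val) →
      a ∈ (Finset.range N).filter (fun i => ptil lam (i + 1) ≤ x.val) := by
    intro a b hab hb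
    simp only [Finset.mem_filter, Finset.mem_range] at hb ⊢
    exact ⟨lt_of_le_of_lt hab hb.1, le_trans (ptil_mono lam (by omega)) hb.2⟩
  have hmem : ∀ a : ℕ, (a < N ∧ ptil lam (a + 1) ≤ x.val) ↔ a < blockOf lam x := by
    intro a
    have h0 := downset_mem _ hdown a
    simp only [Finset.mem_filter, Finset.mem_range] at h0
    exact h0
  have hNpos : 0 < N := by
    by_contra hN
    have hN0 : N = 0 := by omega
    subst hN0
    simp at hsum
    omega
  have hNm : ¬ (N - 1 < N ∧ ptil lam (N - 1 + 1) ≤ x.val) := by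
    rintro ⟨-, hle⟩
    rw [show N - 1 + 1 = N by omega, ptil_ge lam le_rfl, hsum] at hle
    omega
  have hlt : blockOf lam x < N := by
    by_contra hc
    exact hNm ((hmem (N - 1)).mpr (by omega))
  refine ⟨hlt, ?_, ?_⟩
  · rcases Nat.eq_zero_or_pos (blockOf lam x) with hc | hc
    · rw [hc, ptil_zero]; omega
    · have h1 := (hmem (blockOf lam x - 1)).mpr (by omega)
      calc ptil lam (blockOf lam x) ≤ ptil lam (blockOf lam x - 1 + 1) := ptil_mono lam (by omega)
        _ ≤ x.val := h1.2
  · have h1 : ¬ (blockOf lam x < N ∧ ptil lam (blockOf lam x + 1) ≤ x.val) := by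
      rw [hmem]; omega
    by_contra hle
    exact h1 ⟨hlt, by omega⟩

lemma blockOf_lt (lam : Fin N → ℕ) (hsum : ∑ l, lam l = r) (x : Fin r) :
    blockOf lam x < N := (blockOf_spec lam hsum x).1

lemma blockOf_eq_iff (lam : Fin N → ℕ) (hsum : ∑ l, lam l = r) (x : Fin r) (i : ℕ) :
    blockOf lam x = i ↔ (ptil lam i ≤ x.val ∧ x.val < ptil lam (i + 1)) := by
  obtain ⟨hlt, hle, hgt⟩ := blockOf_spec lam hsum x
  constructor
  · rintro rfl; exact ⟨hle, hgt⟩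
  · rintro ⟨h1, h2⟩
    rcases lt_trichotomy (blockOf lam x) i with hc | hc | hc
    · have := ptil_mono lam (show blockOf lam x + 1 ≤ i by omega); omega
    · exact hc
    · have := ptil_mono lam (show i + 1 ≤ blockOf lam x by omega); omega

lemma mem_blockSet_iff (lam : Fin N → ℕ) (hsum : ∑ l, lam l = r) (x : Fin r) (i : ℕ) :
    x ∈ blockSet r lam (i + 1) ↔ blockOf lam x = i := by
  rw [blockOf_eq_iff lam hsum]
  simp [blockSet]

/-- The count `|{z : blockOf α (w z) = i, blockOf β z = j}|`, i.e. `|N_i^α ∩ w(N_j^β)|`. -/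
def Fm (r : ℕ) {N : ℕ} (al be : Fin N → ℕ) (w : Equiv.Perm (Fin r)) (i j : ℕ) : ℕ :=
  (Finset.univ.filter fun z : Fin r => blockOf al (w z) = i ∧ blockOf be z = j).card

lemma Fm_mul (al be : Fin N → ℕ) (x w y : Equiv.Perm (Fin r))
    (hx : x ∈ young r al) (hy : y ∈ young r be) (i j : ℕ) :
    Fm r al be (x * w * y) i j = Fm r al be w i j := by
  unfold Fm
  have h1 : (Finset.univ.filter fun z : Fin r => blockOf al ((x * w * y) z) = i ∧ blockOf be z = j)
      = (Finset.univ.filter fun z : Fin r => blockOf al (w (y z)) = i ∧ blockOf be (y z) = j) := by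
    apply Finset.filter_congr
    intro z _
    simp only [Equiv.Perm.mul_apply]
    rw [mem_young_iff.mp hx (w (y z)), mem_young_iff.mp hy z]
  rw [h1]
  have h2 : (Finset.univ.filter fun z : Fin r => blockOf al (w (y z)) = i ∧ blockOf be (y z) = j)
      = (Finset.univ.filter fun z' : Fin r => blockOf al (w z') = i ∧ blockOf be z' = j).image ⇑y⁻¹ := by
    ext z
    simp only [Finset.mem_image, Finset.mem_filter, Finset.mem_univ, true_and]
    constructor
    · rintro ⟨hz1, hz2⟩; exact ⟨y z, ⟨hz1, hz2⟩, by simp⟩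
    · rintro ⟨a, ⟨ha1, ha2⟩, rfl⟩
      simpa using ⟨ha1, ha2⟩
  rw [h2, Finset.card_image_of_injective _ (Equiv.injective _)]

lemma dcoset_iff (al be : Fin N → ℕ) (hal : ∑ l, al l = r) (hbe : ∑ l, be l = r)
    (d w : Equiv.Perm (Fin r)) :
    w ∈ dcoset r al be d ↔ ∀ i j : ℕ, Fm r al be w i j = Fm r al be d i j := by
  constructor
  · rintro ⟨x, hx, y, hy, rfl⟩ i j
    exact Fm_mul al be x d y hx hy i j
  · intro hF
    classical
    set f : Fin r → ℕ × ℕ := fun z => (blockOf al (w z), blockOf be z) with hf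
    set g : Fin r → ℕ × ℕ := fun z => (blockOf al (d z), blockOf be z) with hg
    have hfib : ∀ b : ℕ × ℕ, Fintype.card {z // f z = b} = Fintype.card {z // g z = b} := by
      intro b
      rw [Fintype.card_subtype, Fintype.card_subtype]
      have h1 : (Finset.univ.filter fun z => f z = b)
          = (Finset.univ.filter fun z : Fin r => blockOf al (w z) = b.1 ∧ blockOf be z = b.2) := by
        apply Finset.filter_congr; intro z _; simp [hf, Prod.ext_iff]
      have h2 : (Finset.univ.filter fun z => g z = b)
          = (Finset.univ.filter fun z : Fin r => blockOf al (d z) = b.1 ∧ blockOf be z = b.2) := by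
        apply Finset.filter_congr; intro z _; simp [hg, Prod.ext_iff]
      rw [h1, h2]
      exact hF b.1 b.2
    let e : ∀ b : ℕ × ℕ, {z // f z = b} ≃ {z // g z = b} := fun b => Fintype.equivOfCardEq (hfib b)
    let y : Equiv.Perm (Fin r) :=
      ((Equiv.sigmaFiberEquiv f).symm.trans (Equiv.sigmaCongrRight e)).trans (Equiv.sigmaFiberEquiv g)
    have hgy : ∀ z, g (y z) = f z := by
      intro z
      have hyz : y z = ((e (f z)) ⟨z, rfl⟩ : {z' // g z' = f z}).val := rfl
      rw [hyz]
      exact ((e (f z)) ⟨z, rfl⟩).prop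
    have hy : y ∈ young r be := by
      rw [mem_young_iff]
      intro z
      have := congrArg Prod.snd (hgy z)
      simpa [hf, hg] using this
    have hxmem : w * y⁻¹ * d⁻¹ ∈ young r al := by
      rw [mem_young_iff]
      intro ξ
      have h1 := congrArg Prod.fst (hgy (y⁻¹ (d⁻¹ ξ)))
      simp only [hf, hg, Equiv.Perm.coe_inv, Equiv.apply_symm_apply] at h1
      simp only [Equiv.Perm.mul_apply]
      exact h1.symm
    refine ⟨w * y⁻¹ * d⁻¹, hxmem, y, hy, by group⟩

lemma card_inter_eq_Fm (al be : Fin N → ℕ) (hal : ∑ l, al l = r) (hbe : ∑ l, be l = r)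
    (d : Equiv.Perm (Fin r)) (i j : ℕ) :
    ((blockSet r al (i + 1)) ∩ (blockSet r be (j + 1)).image ⇑d).card = Fm r al be d i j := by
  classical
  have himg : (blockSet r al (i + 1)) ∩ (blockSet r be (j + 1)).image ⇑d
      = (Finset.univ.filter fun z : Fin r => blockOf al (d z) = i ∧ blockOf be z = j).image ⇑d := by
    ext u
    simp only [Finset.mem_inter, Finset.mem_image, Finset.mem_filter, Finset.mem_univ, true_and]
    rw [mem_blockSet_iff al hal]
    constructor
    · rintro ⟨h1, z, hz, rfl⟩
      exact ⟨z, ⟨h1, (mem_blockSet_iff be hbe z j).mp hz⟩, rfl⟩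
    · rintro ⟨z, ⟨h1, h2⟩, rfl⟩
      exact ⟨h1, z, (mem_blockSet_iff be hbe z j).mpr h2, rfl⟩
  rw [himg, Finset.card_image_of_injective _ (Equiv.injective _)]
  rfl

end Helpers
section Helpers2

variable {r N : ℕ}

lemma sum_ite_val (f : Fin N → ℕ) (a : ℕ) (ha : a < N) :
    (∑ l : Fin N, if l.val = a then f l else 0) = f ⟨a, ha⟩ := by
  rw [Finset.sum_eq_single (⟨a, ha⟩ : Fin N)]
  · rw [if_pos rfl]
  · intro l _ hl
    rw [if_neg (fun hv => hl (Fin.ext hv))]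
  · intro hmem
    simp at hmem

lemma sum_ind (a : ℕ) (ha : a < N) :
    (∑ l : Fin N, if l.val = a then (1 : ℕ) else 0) = 1 :=
  sum_ite_val (fun _ => 1) a ha

lemma sum_ind_and (P : ℕ → Prop) [DecidablePred P] (a : ℕ) (ha : a < N) :
    (∑ l : Fin N, if P l.val ∧ l.val = a then (1 : ℕ) else 0) = if P a then 1 else 0 := by
  have h1 : ∀ l : Fin N, (if P l.val ∧ l.val = a then (1 : ℕ) else 0)
      = (if l.val = a then (if P l.val then (1 : ℕ) else 0) else 0) := by
    intro l
    by_cases hp : P l.val <;> by_cases hv : l.val = a <;> simp [hp, hv]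
  rw [Finset.sum_congr rfl (fun l _ => h1 l), sum_ite_val (fun l => if P l.val then (1 : ℕ) else 0) a ha]

lemma Fm_corr (al al' be : Fin N → ℕ) (p : Fin r) (a : ℕ)
    (hp : ∀ x : Fin r, blockOf al' x = blockOf al x + (if x = p then 1 else 0))
    (hap : blockOf al p = a)
    (w : Equiv.Perm (Fin r)) (i j : ℕ) :
    Fm r al' be w i j + (if i = a ∧ j = blockOf be (w⁻¹ p) then 1 else 0)
      = Fm r al be w i j + (if i = a + 1 ∧ j = blockOf be (w⁻¹ p) then 1 else 0) := by
  have hbp' : blockOf al' p = a + 1 := by rw [hp p, if_pos rfl, hap]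
  have hSz : ((w⁻¹ p) ∈ Finset.univ.filter fun z : Fin r =>
      blockOf al' (w z) = i ∧ blockOf be z = j) ↔ (i = a + 1 ∧ j = blockOf be (w⁻¹ p)) := by
    simp only [Finset.mem_filter, Finset.mem_univ, true_and, Equiv.Perm.coe_inv, Equiv.apply_symm_apply, hbp']
    constructor
    · rintro ⟨h1, h2⟩; exact ⟨h1.symm, h2.symm⟩
    · rintro ⟨h1, h2⟩; exact ⟨h1.symm, h2.symm⟩
  have hTz : ((w⁻¹ p) ∈ Finset.univ.filter fun z : Fin r =>
      blockOf al (w z) = i ∧ blockOf be z = j) ↔ (i = a ∧ j = blockOf be (w⁻¹ p)) := by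
    simp only [Finset.mem_filter, Finset.mem_univ, true_and, Equiv.Perm.coe_inv, Equiv.apply_symm_apply, hap]
    constructor
    · rintro ⟨h1, h2⟩; exact ⟨h1.symm, h2.symm⟩
    · rintro ⟨h1, h2⟩; exact ⟨h1.symm, h2.symm⟩
  have hST : (Finset.univ.filter fun z : Fin r =>
      blockOf al' (w z) = i ∧ blockOf be z = j).erase (w⁻¹ p)
      = (Finset.univ.filter fun z : Fin r =>
      blockOf al (w z) = i ∧ blockOf be z = j).erase (w⁻¹ p) := by
    ext zz
    simp only [Finset.mem_erase, Finset.mem_filter, Finset.mem_univ, true_and]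
    by_cases hz : zz = w⁻¹ p
    · simp [hz]
    · have hwz : w zz ≠ p := by
        intro hcp
        apply hz
        rw [← hcp, Equiv.Perm.coe_inv, Equiv.symm_apply_apply]
      rw [hp (w zz), if_neg hwz, add_zero]
  have cardS : ∀ (S : Finset (Fin r)) (zz : Fin r),
      S.card = (S.erase zz).card + (if zz ∈ S then 1 else 0) := by
    intro S zz
    by_cases hm : zz ∈ S
    · rw [if_pos hm, Finset.card_erase_add_one hm]
    · rw [if_neg hm, Finset.erase_eq_of_notMem hm, add_zero]
  unfold Fm
  rw [cardS (Finset.univ.filter fun z : Fin r => blockOf al' (w z) = i ∧ blockOf be z = j) (w⁻¹ p),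
      cardS (Finset.univ.filter fun z : Fin r => blockOf al (w z) = i ∧ blockOf be z = j) (w⁻¹ p),
      hST, if_congr hSz rfl rfl, if_congr hTz rfl rfl]
  split_ifs <;> omega

lemma dite_rel {N : ℕ} (M : Fin N → Fin N → ℕ) (h : ℕ) (hhN : h < N) (hh1 : h + 1 < N)
    (k : Fin N) (hk : 1 ≤ M ⟨h, hhN⟩ k)
    (MMk : Fin N → Fin N → ℕ)
    (hMMk : ∀ i j : Fin N, MMk i j = if i.val = h ∧ j = k then M i j - 1
      else if i.val = h + 1 ∧ j = k then M i j + 1 else M i j)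
    (A B i j : ℕ)
    (hc : A + (if i = h ∧ j = k.val then 1 else 0) = B + (if i = h + 1 ∧ j = k.val then 1 else 0)) :
    (A = (if hij : i < N ∧ j < N then MMk ⟨i, hij.1⟩ ⟨j, hij.2⟩ else 0))
      ↔ (B = (if hij : i < N ∧ j < N then M ⟨i, hij.1⟩ ⟨j, hij.2⟩ else 0)) := by
  by_cases hij : i < N ∧ j < N
  · rw [dif_pos hij, dif_pos hij, hMMk ⟨i, hij.1⟩ ⟨j, hij.2⟩]
    by_cases hA : i = h ∧ j = k.val
    · have e1 : (⟨i, hij.1⟩ : Fin N) = ⟨h, hhN⟩ := Fin.ext hA.1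
      have e2 : (⟨j, hij.2⟩ : Fin N) = k := Fin.ext hA.2
      rw [e1, e2, if_pos ⟨rfl, rfl⟩]
      rw [if_pos hA, if_neg (by rintro ⟨c1, -⟩; omega)] at hc
      omega
    · have hA' : ¬((⟨i, hij.1⟩ : Fin N).val = h ∧ (⟨j, hij.2⟩ : Fin N) = k) := by
        rintro ⟨c1, c2⟩
        exact hA ⟨c1, congrArg Fin.val c2⟩
      rw [if_neg hA']
      rw [if_neg hA] at hc
      by_cases hB : i = h + 1 ∧ j = k.val
      · have e1 : (⟨i, hij.1⟩ : Fin N) = ⟨h + 1, hh1⟩ := Fin.ext hB.1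
        have e2 : (⟨j, hij.2⟩ : Fin N) = k := Fin.ext hB.2
        rw [e1, e2, if_pos ⟨rfl, rfl⟩]
        rw [if_pos hB] at hc
        omega
      · have hB' : ¬((⟨i, hij.1⟩ : Fin N).val = h + 1 ∧ (⟨j, hij.2⟩ : Fin N) = k) := by
          rintro ⟨c1, c2⟩
          exact hB ⟨c1, congrArg Fin.val c2⟩
        rw [if_neg hB']
        rw [if_neg hB] at hc
        omega
  · rw [dif_neg hij, dif_neg hij]
    have hnA : ¬(i = h ∧ j = k.val) := by rintro ⟨rfl, rfl⟩; exact hij ⟨hhN, k.isLt⟩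
    have hnB : ¬(i = h + 1 ∧ j = k.val) := by rintro ⟨rfl, rfl⟩; exact hij ⟨hh1, k.isLt⟩
    rw [if_neg hnA, if_neg hnB] at hc
    omega

end Helpers2
/-- Theorem `prod coset`, second decomposition.
With `λ = ro M`, `μ = co M`, `λ_h ≥ 1` (0-based row `h`), and `λ⁻ = λ - e_h + e_{h+1}`:
`(W_{λ⁻} · 1 · W_λ)(W_λ d_M W_μ) = ⋃_{k, m_{h,k} ≥ 1} W_{λ⁻} d_{M⁻_{h,k}} W_μ`,
a disjoint union. -/
theorem stmt1 (N r : ℕ) (hN : 2 ≤ N) (M : Fin N → Fin N → ℕ)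
    (hMr : ∑ i, ∑ j, M i j = r)
    (h : ℕ) (hh : h + 1 < N)
    (hrow : 1 ≤ rowSums M ⟨h, by omega⟩)
    (lamM : Fin N → ℕ)
    (hlamM : ∀ i : Fin N, lamM i =
      if i.val = h then rowSums M i - 1
      else if i.val = h + 1 then rowSums M i + 1 else rowSums M i)
    (MM : Fin N → (Fin N → Fin N → ℕ))
    (hMM : ∀ k : Fin N, ∀ i j : Fin N, MM k i j =
      if i.val = h ∧ j = k then M i j - 1
      else if i.val = h + 1 ∧ j = k then M i j + 1 else M i j)
    (dM : Equiv.Perm (Fin r)) (hdM : isDM r M dM)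
    (dMn : Fin N → Equiv.Perm (Fin r))
    (hdMn : ∀ k : Fin N, 1 ≤ M ⟨h, by omega⟩ k → isDM r (MM k) (dMn k)) :
    ({w : Equiv.Perm (Fin r) |
        ∃ x ∈ dcoset r lamM (rowSums M) 1, ∃ y ∈ dcoset r (rowSums M) (colSums M) dM,
          w = x * y}
      = ⋃ k ∈ {k : Fin N | 1 ≤ M ⟨h, by omega⟩ k}, dcoset r lamM (colSums M) (dMn k)) ∧
    ∀ k k' : Fin N, k ≠ k' → 1 ≤ M ⟨h, by omega⟩ k → 1 ≤ M ⟨h, by omega⟩ k' →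
      Disjoint (dcoset r lamM (colSums M) (dMn k)) (dcoset r lamM (colSums M) (dMn k')) := by
    classical
  have hhN : h < N := by omega
  -- total sums
  have hlamr : ∑ l, rowSums M l = r := by simpa [rowSums] using hMr
  have hber : ∑ l, colSums M l = r := by
    rw [show (∑ l, colSums M l) = ∑ j, ∑ i, M i j from rfl, Finset.sum_comm]
    exact hMr
  -- key termwise relation between lamM and rowSums M
  have hkey : ∀ l : Fin N, lamM l + (if l.val = h then 1 else 0)
      = rowSums M l + (if l.val = h + 1 then 1 else 0) := by
    intro l
    by_cases h1 : l.val = h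
    · have he : l = ⟨h, hhN⟩ := Fin.ext h1
      have hl : 1 ≤ rowSums M l := by rw [he]; exact hrow
      rw [hlamM l]
      split_ifs <;> omega
    · rw [hlamM l]
      split_ifs <;> omega
  -- partial sums relation
  have hptil : ∀ i : ℕ, ptil lamM i + (if h + 1 ≤ i then 1 else 0)
      = ptil (rowSums M) i + (if h + 2 ≤ i then 1 else 0) := by
    intro i
    have e1 : (if h + 1 ≤ i then (1 : ℕ) else 0)
        = ∑ l : Fin N, if l.val + 1 ≤ i ∧ l.val = h then (1 : ℕ) else 0 := by
      rw [sum_ind_and (fun a => a + 1 ≤ i) h hhN]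
    have e2 : (if h + 2 ≤ i then (1 : ℕ) else 0)
        = ∑ l : Fin N, if l.val + 1 ≤ i ∧ l.val = h + 1 then (1 : ℕ) else 0 := by
      rw [sum_ind_and (fun a => a + 1 ≤ i) (h + 1) hh]
    rw [e1, e2]
    unfold ptil
    rw [← Finset.sum_add_distrib, ← Finset.sum_add_distrib]
    apply Finset.sum_congr rfl
    intro l _
    by_cases hc : l.val + 1 ≤ i
    · simp only [hc, if_true, true_and]
      exact hkey l
    · simp only [hc, if_false, false_and]
  have hptil_ne : ∀ i : ℕ, i ≠ h + 1 → ptil lamM i = ptil (rowSums M) i := by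
    intro i hi
    have hp := hptil i
    split_ifs at hp <;> omega
  have hptil_h1 : ptil lamM (h + 1) + 1 = ptil (rowSums M) (h + 1) := by
    have hp := hptil (h + 1)
    split_ifs at hp <;> omega
  have hlamMr : ∑ l, lamM l = r := by
    have h1 := hptil_ne N (by omega)
    rw [ptil_ge lamM le_rfl, ptil_ge (rowSums M) le_rfl] at h1
    rw [h1]
    exact hlamr
  -- the special point p
  have hP1 : 1 ≤ ptil (rowSums M) (h + 1) := by
    rw [ptil_succ (rowSums M) hhN]
    have h1 : 1 ≤ rowSums M ⟨h, hhN⟩ := hrow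
    omega
  have hPr : ptil (rowSums M) (h + 1) ≤ r := by
    rw [← hlamr, ← ptil_ge (rowSums M) (le_refl N)]
    exact ptil_mono (rowSums M) (by omega)
  set p : Fin r := ⟨ptil (rowSums M) (h + 1) - 1, by omega⟩ with hpdef
  have hpv : p.val = ptil (rowSums M) (h + 1) - 1 := rfl
  have hbp : blockOf (rowSums M) p = h := by
    rw [blockOf_eq_iff (rowSums M) hlamr]
    have hs := ptil_succ (rowSums M) hhN
    have h1 : 1 ≤ rowSums M ⟨h, hhN⟩ := hrow
    omega
  have hbOf : ∀ x : Fin r, blockOf lamM x = blockOf (rowSums M) x + (if x = p then 1 else 0) := by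
    intro x
    have hAB : ((Finset.range N).filter (fun i => ptil lamM (i + 1) ≤ x.val)).erase h
        = ((Finset.range N).filter (fun i => ptil (rowSums M) (i + 1) ≤ x.val)).erase h := by
      ext i
      simp only [Finset.mem_erase, Finset.mem_filter, Finset.mem_range]
      constructor
      · rintro ⟨hi, hiN, hle⟩
        exact ⟨hi, hiN, by rwa [hptil_ne (i + 1) (by omega)] at hle⟩
      · rintro ⟨hi, hiN, hle⟩
        exact ⟨hi, hiN, by rwa [← hptil_ne (i + 1) (by omega)] at hle⟩
    by_cases hx : x = p
    · have hxv : x.val = ptil (rowSums M) (h + 1) - 1 := by rw [hx]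
      have hhA : h ∈ (Finset.range N).filter (fun i => ptil lamM (i + 1) ≤ x.val) := by
        simp only [Finset.mem_filter, Finset.mem_range]
        exact ⟨hhN, by omega⟩
      have hhB : h ∉ (Finset.range N).filter (fun i => ptil (rowSums M) (i + 1) ≤ x.val) := by
        simp only [Finset.mem_filter, Finset.mem_range]
        rintro ⟨-, hle⟩
        omega
      rw [if_pos hx]
      unfold blockOf
      rw [← Finset.card_erase_add_one hhA, hAB, Finset.erase_eq_of_notMem hhB]
    · rw [if_neg hx, add_zero]
      unfold blockOf
      congr 1
      ext i
      simp only [Finset.mem_filter, Finset.mem_range]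
      by_cases hih : i = h
      · rw [hih]
        have hxv : x.val ≠ ptil (rowSums M) (h + 1) - 1 := by
          intro hcv
          exact hx (Fin.ext (by rw [hcv, hpv]))
        have hp1 := hptil_h1
        constructor
        · rintro ⟨h1, h2⟩
          exact ⟨h1, by omega⟩
        · rintro ⟨h1, h2⟩
          exact ⟨h1, by omega⟩
      · rw [hptil_ne (i + 1) (by omega)]
  have hbOfp : blockOf lamM p = h + 1 := by rw [hbOf p, if_pos rfl, hbp]
  have hcorr : ∀ (w : Equiv.Perm (Fin r)) (i j : ℕ),
      Fm r lamM (colSums M) w i j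
          + (if i = h ∧ j = blockOf (colSums M) (w⁻¹ p) then 1 else 0)
        = Fm r (rowSums M) (colSums M) w i j
          + (if i = h + 1 ∧ j = blockOf (colSums M) (w⁻¹ p) then 1 else 0) :=
    fun w i j => Fm_corr (rowSums M) lamM (colSums M) p h hbOf hbp w i j
  -- matrices MM k
  have hrowMM : ∀ k : Fin N, 1 ≤ M ⟨h, hhN⟩ k → rowSums (MM k) = lamM := by
    intro k hk
    funext i
    show ∑ j, MM k i j = lamM i
    have hrS : rowSums M i = ∑ j, M i j := rfl
    rw [hlamM i]
    by_cases h1 : i.val = h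
    · have he : i = ⟨h, hhN⟩ := Fin.ext h1
      have hik : 1 ≤ M i k := by rw [he]; exact hk
      have ht : ∀ j : Fin N, MM k i j + (if j = k then 1 else 0) = M i j := by
        intro j
        rw [hMM k i j]
        by_cases h2 : j = k
        · subst h2
          rw [if_pos ⟨h1, rfl⟩, if_pos rfl]
          omega
        · rw [if_neg (by tauto), if_neg (by tauto), if_neg h2, add_zero]
      have hsum2 : (∑ j, MM k i j) + 1 = ∑ j, M i j := by
        rw [← Finset.sum_congr rfl (fun j _ => ht j), Finset.sum_add_distrib]
        congr 1
        simp
      rw [if_pos h1]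
      omega
    · rw [if_neg h1]
      by_cases h2 : i.val = h + 1
      · have ht : ∀ j : Fin N, MM k i j = M i j + (if j = k then 1 else 0) := by
          intro j
          rw [hMM k i j]
          by_cases h3 : j = k
          · rw [if_neg (by tauto), if_pos ⟨h2, h3⟩, if_pos h3]
          · rw [if_neg (by tauto), if_neg (by tauto), if_neg h3, add_zero]
        have hsum2 : (∑ j, MM k i j) = (∑ j, M i j) + 1 := by
          rw [Finset.sum_congr rfl (fun j _ => ht j), Finset.sum_add_distrib]
          congr 1
          simp
        rw [if_pos h2]
        omega
      · have ht : ∀ j : Fin N, MM k i j = M i j := by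
          intro j
          rw [hMM k i j, if_neg (by tauto), if_neg (by tauto)]
        rw [if_neg h2, Finset.sum_congr rfl (fun j _ => ht j)]
        exact hrS.symm
  have hcolMM : ∀ k : Fin N, 1 ≤ M ⟨h, hhN⟩ k → colSums (MM k) = colSums M := by
    intro k hk
    funext j
    show ∑ i, MM k i j = ∑ i, M i j
    by_cases h2 : j = k
    · have ht : ∀ i : Fin N, MM k i j + (if i.val = h then 1 else 0)
          = M i j + (if i.val = h + 1 then 1 else 0) := by
        intro i
        rw [hMM k i j]
        by_cases hi1 : i.val = h
        · have he : i = ⟨h, hhN⟩ := Fin.ext hi1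
          have hMik : 1 ≤ M i j := by rw [he, h2]; exact hk
          rw [if_pos ⟨hi1, h2⟩]
          split_ifs <;> omega
        · rw [if_neg (by tauto)]
          by_cases hi2 : i.val = h + 1
          · rw [if_pos ⟨hi2, h2⟩]
            split_ifs <;> omega
          · rw [if_neg (by tauto)]
            split_ifs <;> omega
      have hsc := Finset.sum_congr rfl (fun i (_ : i ∈ Finset.univ) => ht i)
      rw [Finset.sum_add_distrib, Finset.sum_add_distrib, sum_ind h hhN, sum_ind (h + 1) hh] at hsc
      omega
    · apply Finset.sum_congr rfl
      intro i _
      rw [hMM k i j, if_neg (by tauto), if_neg (by tauto)]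
  -- characterization of the double cosets by Fm
  have hFd : ∀ i j : ℕ, Fm r (rowSums M) (colSums M) dM i j
      = (if hij : i < N ∧ j < N then M ⟨i, hij.1⟩ ⟨j, hij.2⟩ else 0) := by
    intro i j
    by_cases hij : i < N ∧ j < N
    · rw [dif_pos hij, ← hdM.2 ⟨i, hij.1⟩ ⟨j, hij.2⟩]
      exact (card_inter_eq_Fm (rowSums M) (colSums M) hlamr hber dM i j).symm
    · rw [dif_neg hij]
      unfold Fm
      rw [Finset.card_eq_zero, Finset.filter_eq_empty_iff]
      intro z _
      rintro ⟨h1, h2⟩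
      exact hij ⟨h1 ▸ blockOf_lt (rowSums M) hlamr (dM z), h2 ▸ blockOf_lt (colSums M) hber z⟩
  have hFdn : ∀ k : Fin N, 1 ≤ M ⟨h, hhN⟩ k → ∀ i j : ℕ,
      Fm r lamM (colSums M) (dMn k) i j
        = (if hij : i < N ∧ j < N then MM k ⟨i, hij.1⟩ ⟨j, hij.2⟩ else 0) := by
    intro k hk i j
    have hdm2 := (hdMn k hk).2
    rw [hrowMM k hk, hcolMM k hk] at hdm2
    by_cases hij : i < N ∧ j < N
    · rw [dif_pos hij, ← hdm2 ⟨i, hij.1⟩ ⟨j, hij.2⟩]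
      exact (card_inter_eq_Fm lamM (colSums M) hlamMr hber (dMn k) i j).symm
    · rw [dif_neg hij]
      unfold Fm
      rw [Finset.card_eq_zero, Finset.filter_eq_empty_iff]
      intro z _
      rintro ⟨h1, h2⟩
      exact hij ⟨h1 ▸ blockOf_lt lamM hlamMr (dMn k z), h2 ▸ blockOf_lt (colSums M) hber z⟩
  constructor
  · ext w
    simp only [Set.mem_setOf_eq, Set.mem_iUnion]
    constructor
    · rintro ⟨x, hx, y, hy, rfl⟩
      obtain ⟨u, hu, v, hv, rfl⟩ := hx
      have hyF := (dcoset_iff (rowSums M) (colSums M) hlamr hber dM y).mp hy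
      set z := v * y with hzdef
      have hzF : ∀ i j : ℕ, Fm r (rowSums M) (colSums M) z i j
          = (if hij : i < N ∧ j < N then M ⟨i, hij.1⟩ ⟨j, hij.2⟩ else 0) := by
        intro i j
        rw [show z = v * y * 1 from by rw [hzdef]; group,
          Fm_mul (rowSums M) (colSums M) v y 1 hv (one_mem _), hyF i j]
        exact hFd i j
      have hj0N : blockOf (colSums M) (z⁻¹ p) < N := blockOf_lt (colSums M) hber (z⁻¹ p)
      have hk1 : 1 ≤ M ⟨h, hhN⟩ ⟨blockOf (colSums M) (z⁻¹ p), hj0N⟩ := by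
        have hpos : 0 < Fm r (rowSums M) (colSums M) z h (blockOf (colSums M) (z⁻¹ p)) := by
          unfold Fm
          rw [Finset.card_pos]
          refine ⟨z⁻¹ p, ?_⟩
          simp only [Finset.mem_filter, Finset.mem_univ, true_and, Equiv.Perm.coe_inv, Equiv.apply_symm_apply]
          exact ⟨hbp, trivial⟩
        rw [hzF h (blockOf (colSums M) (z⁻¹ p)), dif_pos ⟨hhN, hj0N⟩] at hpos
        exact hpos
      refine ⟨⟨blockOf (colSums M) (z⁻¹ p), hj0N⟩, hk1, ?_⟩
      rw [dcoset_iff lamM (colSums M) hlamMr hber]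
      intro i j
      rw [hFdn ⟨blockOf (colSums M) (z⁻¹ p), hj0N⟩ hk1 i j]
      rw [show u * 1 * v * y = u * z * 1 from by rw [hzdef]; group,
        Fm_mul lamM (colSums M) u z 1 hu (one_mem _)]
      exact (dite_rel M h hhN hh ⟨blockOf (colSums M) (z⁻¹ p), hj0N⟩ hk1
        (MM ⟨blockOf (colSums M) (z⁻¹ p), hj0N⟩)
        (fun a b => hMM ⟨blockOf (colSums M) (z⁻¹ p), hj0N⟩ a b)
        (Fm r lamM (colSums M) z i j) (Fm r (rowSums M) (colSums M) z i j) i j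
        (hcorr z i j)).mpr (hzF i j)
    · rintro ⟨k, hk, hw⟩
      have hk' : 1 ≤ M ⟨h, hhN⟩ k := hk
      have hwF : ∀ i j : ℕ, Fm r lamM (colSums M) w i j
          = (if hij : i < N ∧ j < N then MM k ⟨i, hij.1⟩ ⟨j, hij.2⟩ else 0) := by
        intro i j
        rw [(dcoset_iff lamM (colSums M) hlamMr hber (dMn k) w).mp hw i j]
        exact hFdn k hk' i j
      have hpos : 0 < Fm r lamM (colSums M) w (h + 1) k.val := by
        rw [hwF (h + 1) k.val, dif_pos ⟨hh, k.isLt⟩, hMM k]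
        rw [if_neg (by rintro ⟨c1, -⟩; have hcc : h + 1 = h := c1; omega), if_pos ⟨rfl, rfl⟩]
        omega
      obtain ⟨z1, hz1⟩ := Finset.card_pos.mp hpos
      simp only [Finset.mem_filter, Finset.mem_univ, true_and] at hz1
      set q : Fin r := w z1 with hqdef
      have hu : Equiv.swap p q ∈ young r lamM := by
        rw [mem_young_iff]
        intro x
        by_cases hx1 : x = p
        · subst hx1
          rw [Equiv.swap_apply_left, hz1.1, hbOfp]
        · by_cases hx2 : x = q
          · subst hx2
            rw [Equiv.swap_apply_right, hz1.1, hbOfp]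
          · rw [Equiv.swap_apply_of_ne_of_ne hx1 hx2]
      set z : Equiv.Perm (Fin r) := (Equiv.swap p q)⁻¹ * w with hzdef
      have hzinv : z⁻¹ p = z1 := by
        rw [hzdef]
        simp only [mul_inv_rev, inv_inv, Equiv.Perm.mul_apply, Equiv.swap_apply_left, hqdef,
          Equiv.Perm.coe_inv, Equiv.symm_apply_apply]
      have hzF : ∀ i j : ℕ, Fm r lamM (colSums M) z i j = Fm r lamM (colSums M) w i j := by
        intro i j
        rw [show z = (Equiv.swap p q)⁻¹ * w * 1 from by rw [hzdef]; group,
          Fm_mul lamM (colSums M) _ w 1 (inv_mem hu) (one_mem _)]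
      have hcz : Fm r lamM (colSums M) z (0 : ℕ) (0 : ℕ) = Fm r lamM (colSums M) z 0 0 := rfl
      have hzD : z ∈ dcoset r (rowSums M) (colSums M) dM := by
        rw [dcoset_iff (rowSums M) (colSums M) hlamr hber]
        intro i j
        rw [hFd i j]
        have hc := hcorr z i j
        rw [hzinv, hz1.2] at hc
        have hA : Fm r lamM (colSums M) z i j
            = (if hij : i < N ∧ j < N then MM k ⟨i, hij.1⟩ ⟨j, hij.2⟩ else 0) := by
          rw [hzF i j]
          exact hwF i j
        exact (dite_rel M h hhN hh k hk' (MM k) (fun a b => hMM k a b)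
          (Fm r lamM (colSums M) z i j) (Fm r (rowSums M) (colSums M) z i j) i j hc).mp hA
      refine ⟨Equiv.swap p q, ⟨Equiv.swap p q, hu, 1, one_mem _, by group⟩, z, hzD, ?_⟩
      rw [hzdef]
      group
  · intro k k' hkk hk1 hk2
    rw [Set.disjoint_left]
    intro w hw hw'
    have h1 := (dcoset_iff lamM (colSums M) hlamMr hber (dMn k) w).mp hw h k.val
    have h2 := (dcoset_iff lamM (colSums M) hlamMr hber (dMn k') w).mp hw' h k.val
    rw [hFdn k hk1 h k.val, dif_pos ⟨hhN, k.isLt⟩, hMM k, if_pos ⟨rfl, rfl⟩] at h1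
    rw [hFdn k' hk2 h k.val, dif_pos ⟨hhN, k.isLt⟩, hMM k'] at h2
    have hne : ¬((⟨h, (⟨hhN, k.isLt⟩ : h < N ∧ k.val < N).1⟩ : Fin N).val = h
        ∧ (⟨k.val, (⟨hhN, k.isLt⟩ : h < N ∧ k.val < N).2⟩ : Fin N) = k') := by
      rintro ⟨-, c2⟩
      exact hkk (by rw [← c2])
    have hne2 : ¬((⟨h, (⟨hhN, k.isLt⟩ : h < N ∧ k.val < N).1⟩ : Fin N).val = h + 1
        ∧ (⟨k.val, (⟨hhN, k.isLt⟩ : h < N ∧ k.val < N).2⟩ : Fin N) = k') := by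
      rintro ⟨c1, -⟩
      have hcc : h = h + 1 := c1
      omega
    rw [if_neg hne, if_neg hne2] at h2
    have hkk1 : 1 ≤ M ⟨h, hhN⟩ k := hk1
    have heq : M ⟨h, (⟨hhN, k.isLt⟩ : h < N ∧ k.val < N).1⟩
        ⟨k.val, (⟨hhN, k.isLt⟩ : h < N ∧ k.val < N).2⟩ = M ⟨h, hhN⟩ k := by
      congr 1
    omega
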